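/- Fix p₁, p₂ ∈ (0,1). Consider maximizing (1−k)θ₁θ₂ over triples (k,θ₁,θ₂) with k ∈ [0,1), θ₁, θ₂ ∈ [0,1], subject to the two constraints k + (1−k)h(θᵢ) = pᵢ for i = 1,2. Then every maximizer has k = 0; that is, with two buyers whose priors have possibly different means p₁ and p₂, the seller-worst information structure gives each buyer a truncated Pareto signal distribution with virtual values {0,1}. -/

import Mathlib

open Set

noncomputable def h (θ : ℝ) : ℝ := (1 - θ) * (1 - Real.log (1 - θ))

noncomputable def Fq (θ : ℝ) : ℝ := θ + (1 - θ) * Real.log (1 - θ)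

lemma hF : ∀ θ, Fq θ = 1 - h θ := by intro θ; simp [Fq, h]; ring

lemma Fq_cont : Continuous Fq := by
  have : Fq = fun θ => θ + (fun x => x * Real.log x) (1 - θ) := rfl
  rw [this]
  exact continuous_id.add (Real.continuous_mul_log.comp (continuous_const.sub continuous_id))

lemma Fq_deriv {x : ℝ} (hx : x < 1) : HasDerivAt Fq (-Real.log (1-x)) x := by
  have hne : (1 - x) ≠ 0 := by linarith
  have hu : HasDerivAt (fun u : ℝ => u * Real.log u)
      (1 * Real.log (1-x) + (1-x) * (1-x)⁻¹) (1-x) :=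
    (hasDerivAt_id _).mul (Real.hasDerivAt_log hne)
  have hcomp : HasDerivAt (fun θ : ℝ => (1-θ) * Real.log (1-θ))
      ((1 * Real.log (1-x) + (1-x) * (1-x)⁻¹) * (-1)) x :=
    HasDerivAt.comp x hu (by simpa using (hasDerivAt_id x).const_sub 1)
  have := (hasDerivAt_id x).add hcomp
  exact this.congr_deriv (by rw [mul_inv_cancel₀ hne]; ring)


lemma log_lt_pade_aux {t : ℝ} (ht : t ∈ Set.Ioo (0:ℝ) 1) :
    Real.log t < -(2*(1-t)/(1+t)) := by
  set g : ℝ → ℝ := fun x => Real.log x + 2*(1-x)/(1+x) with hg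
  have hmono : StrictMonoOn g (Set.Ioc (0:ℝ) 1) := by
    apply strictMonoOn_of_deriv_pos (convex_Ioc 0 1)
    · apply ContinuousOn.add
      · exact Real.continuousOn_log.mono (by intro x hx; exact ne_of_gt hx.1)
      · apply ContinuousOn.div (by fun_prop) (by fun_prop)
        intro x hx; nlinarith [hx.1]
    · intro x hx
      rw [interior_Ioc] at hx
      have hx0 : (0:ℝ) < x := hx.1
      have hx1 : x < 1 := hx.2
      have h1 : (1 + x) ≠ 0 := by nlinarith
      have hd : HasDerivAt g (x⁻¹ + (2 * (-1) * (1+x) - 2*(1-x)*1)/(1+x)^2) x := by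
        apply HasDerivAt.add (Real.hasDerivAt_log (ne_of_gt hx0))
        exact (((hasDerivAt_id x).const_sub 1 |>.const_mul 2).div
          ((hasDerivAt_id x).const_add 1) h1)
      rw [hd.deriv]
      have heq : x⁻¹ + (2 * (-1) * (1+x) - 2*(1-x)*1)/(1+x)^2
          = (1-x)^2 / (x*(1+x)^2) := by
        field_simp
        ring
      rw [heq]
      exact div_pos (by nlinarith) (by positivity)
  have h2 := hmono (mem_Ioc.2 ⟨ht.1, le_of_lt ht.2⟩) (mem_Ioc.2 ⟨one_pos, le_refl 1⟩) ht.2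
  have h3 : g 1 = 0 := by simp [hg]
  have h4 : g t < 0 := by rw [← h3]; exact h2
  simp only [hg] at h4
  linarith

lemma q_mono : StrictMonoOn (fun θ => Fq θ / θ^2) (Set.Ioc (0:ℝ) 1) := by
  apply strictMonoOn_of_deriv_pos (convex_Ioc 0 1)
  · exact (Fq_cont.continuousOn).div (by fun_prop)
      (fun x hx => by have := hx.1; positivity)
  · intro x hx
    rw [interior_Ioc] at hx
    have hx0 : (0:ℝ) < x := hx.1
    have hx1 : x < 1 := hx.2
    have hd : HasDerivAt (fun θ => Fq θ / θ^2)
        ((-Real.log (1-x) * x^2 - Fq x * (↑2 * x^(2-1))) / (x^2)^2) x :=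
      (Fq_deriv hx1).div (hasDerivAt_pow 2 x) (by positivity)
    rw [hd.deriv]
    have hpade := log_lt_pade_aux (show 1 - x ∈ Set.Ioo (0:ℝ) 1 by constructor <;> linarith)
    have h2x : (0:ℝ) < 2 - x := by linarith
    have hkey : 2 * x < -((2 - x) * Real.log (1-x)) := by
      have : 2*(1-(1-x))/(1+(1-x)) = 2*x/(2-x) := by ring_nf
      rw [this] at hpade
      have := (div_lt_iff₀ h2x).mp (by linarith : 2*x/(2-x) < -Real.log (1-x))
      nlinarith
    apply div_pos _ (by positivity)
    have hFx : Fq x = x + (1-x)*Real.log (1-x) := rfl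
    simp only [hFx]
    push_cast
    nlinarith

lemma key_ineq {θ s : ℝ} (hθ : θ ∈ Set.Ioc (0:ℝ) 1) (hs : s ∈ Set.Ioo (0:ℝ) 1) :
    1 - s^2 + s^2 * h θ < h (s*θ) := by
  have hsθ : s*θ ∈ Set.Ioc (0:ℝ) 1 :=
    ⟨mul_pos hs.1 hθ.1, mul_le_one₀ (le_of_lt hs.2) (le_of_lt hθ.1) hθ.2⟩
  have hlt : s*θ < θ := by nlinarith [hθ.1, hs.2]
  have := q_mono hsθ hθ hlt
  have hq : Fq (s*θ) / (s*θ)^2 < Fq θ / θ^2 := this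
  have h1 : Fq (s*θ) < s^2 * Fq θ := by
    rw [div_lt_div_iff₀ (pow_pos (mul_pos hs.1 hθ.1) 2) (pow_pos hθ.1 2)] at hq
    nlinarith [hq]
  rw [hF, hF] at h1
  linarith

lemma h_cont : Continuous h := by
  have : h = fun θ => (1-θ) - (fun x => x * Real.log x) (1-θ) := by
    funext θ; simp [h]; ring
  rw [this]
  exact (continuous_const.sub continuous_id).sub
    (Real.continuous_mul_log.comp (continuous_const.sub continuous_id))

lemma Fq_pos {b : ℝ} (hb : b ∈ Set.Ioc (0:ℝ) 1) : 0 < Fq b := by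
  rcases eq_or_lt_of_le hb.2 with h1 | h1
  · simp [h1, Fq]
  · have h1b : (0:ℝ) < 1 - b := by linarith
    have hne : (1-b)⁻¹ ≠ 1 := by
      intro hcon
      have : (1:ℝ) - b = 1 := by
        field_simp at hcon; linarith
      linarith [hb.1]
    have := Real.log_lt_sub_one_of_pos (inv_pos.2 h1b) hne
    rw [Real.log_inv] at this
    have hlog : -(b/(1-b)) < Real.log (1-b) := by
      have hinv : (1-b)⁻¹ - 1 = b/(1-b) := by field_simp; ring
      rw [hinv] at this
      linarith
    have := (mul_lt_mul_iff_right₀ h1b).mpr hlog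
    have hid : (1-b) * -(b/(1-b)) = -b := by field_simp
    rw [hid] at this
    simp only [Fq]
    linarith [hb.1]

lemma h_anti : StrictAntiOn h (Set.Icc (0:ℝ) 1) := by
  have : ∀ θ, h θ = 1 - Fq θ := fun θ => by rw [hF]; ring
  intro a ha b hb hab
  simp only [this]
  have hb1 : b ≤ 1 := hb.2
  have ha0 : 0 ≤ a := ha.1
  -- Fq strictly mono on Icc 0 1
  have hFmono : Fq a < Fq b := by
    by_cases ha0' : a = 0
    · have hFa : Fq a = 0 := by simp [ha0', Fq]
      rw [hFa]
      have hb' : b ∈ Set.Ioc (0:ℝ) 1 := ⟨ha0' ▸ hab, hb1⟩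
      exact Fq_pos hb'
    · have ha' : a ∈ Set.Ioc (0:ℝ) 1 := ⟨lt_of_le_of_ne ha0 (Ne.symm ha0'), ha.2⟩
      have hb' : b ∈ Set.Ioc (0:ℝ) 1 := ⟨lt_trans ha'.1 hab, hb1⟩
      have hq := q_mono ha' hb' hab
      have := (div_lt_div_iff₀ (pow_pos ha'.1 2) (pow_pos hb'.1 2)).mp hq
      nlinarith [this, Fq_pos ha', pow_pos ha'.1 2,
        (show (0:ℝ) < b^2 - a^2 by nlinarith [ha'.1, hb'.1, hab])]
  linarith

lemma h_zero : h 0 = 1 := by simp [h]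
lemma h_one : h 1 = 0 := by simp [h]

lemma exists_theta {p : ℝ} (hp : p ∈ Set.Ioo (0:ℝ) 1) :
    ∃ θ ∈ Set.Ioo (0:ℝ) 1, h θ = p := by
  have hsub := intermediate_value_Icc' (by norm_num : (0:ℝ) ≤ 1) h_cont.continuousOn
  have hmem : p ∈ Set.Icc (h 1) (h 0) := by
    rw [h_zero, h_one]; exact ⟨hp.1.le, hp.2.le⟩
  obtain ⟨θ, hθ, hθp⟩ := hsub hmem
  refine ⟨θ, ⟨?_, ?_⟩, hθp⟩
  · rcases eq_or_lt_of_le hθ.1 with h0 | h0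
    · exfalso; rw [← h0, h_zero] at hθp; linarith [hp.2]
    · exact h0
  · rcases eq_or_lt_of_le hθ.2 with h1 | h1
    · exfalso; rw [h1, h_one] at hθp; linarith [hp.1]
    · exact h1

/-- two-buyer seller-worst problem with asymmetric prior means
`p₁, p₂ ∈ (0,1)`: every maximizer of `(1−k)θ₁θ₂` over `k ∈ [0,1)`,
`θ₁,θ₂ ∈ [0,1]` subject to `k + (1−k)h(θᵢ) = pᵢ` has `k = 0`. -/
theorem stmt13 (p₁ p₂ : ℝ) (hp₁ : p₁ ∈ Set.Ioo (0:ℝ) 1)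
    (hp₂ : p₂ ∈ Set.Ioo (0:ℝ) 1) :
    ∀ k ∈ Set.Ico (0:ℝ) 1, ∀ θ₁ ∈ Set.Icc (0:ℝ) 1, ∀ θ₂ ∈ Set.Icc (0:ℝ) 1,
      k + (1 - k) * h θ₁ = p₁ →
      k + (1 - k) * h θ₂ = p₂ →
      (∀ k' ∈ Set.Ico (0:ℝ) 1, ∀ θ₁' ∈ Set.Icc (0:ℝ) 1, ∀ θ₂' ∈ Set.Icc (0:ℝ) 1,
        k' + (1 - k') * h θ₁' = p₁ →
        k' + (1 - k') * h θ₂' = p₂ →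
        (1 - k') * θ₁' * θ₂' ≤ (1 - k) * θ₁ * θ₂) →
      k = 0 := by
  intro k hk θ₁ hθ₁ θ₂ hθ₂ hc₁ hc₂ hmax
  by_contra hk0
  have hkpos : 0 < k := lt_of_le_of_ne hk.1 (Ne.symm hk0)
  have hk1 : k < 1 := hk.2
  set s : ℝ := Real.sqrt (1 - k) with hs
  have hs2 : s^2 = 1 - k := Real.sq_sqrt (by linarith)
  have hspos : 0 < s := Real.sqrt_pos.2 (by linarith)
  have hslt1 : s < 1 := by
    nlinarith [hs2, hspos]
  -- θᵢ positive
  have hθpos : ∀ θ : ℝ, θ ∈ Set.Icc (0:ℝ) 1 → ∀ p : ℝ, p < 1 →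
      k + (1 - k) * h θ = p → θ ∈ Set.Ioc (0:ℝ) 1 := by
    intro θ hθ p hp hc
    refine ⟨?_, hθ.2⟩
    rcases eq_or_lt_of_le hθ.1 with h0 | h0
    · exfalso; rw [← h0, h_zero] at hc; linarith
    · exact h0
  have hθ₁' := hθpos θ₁ hθ₁ p₁ hp₁.2 hc₁
  have hθ₂' := hθpos θ₂ hθ₂ p₂ hp₂.2 hc₂
  -- new points
  obtain ⟨τ₁, hτ₁, hτ₁p⟩ := exists_theta hp₁
  obtain ⟨τ₂, hτ₂, hτ₂p⟩ := exists_theta hp₂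
  -- key: s*θᵢ < τᵢ
  have hkey : ∀ θ τ p : ℝ, θ ∈ Set.Ioc (0:ℝ) 1 → τ ∈ Set.Ioo (0:ℝ) 1 →
      k + (1 - k) * h θ = p → h τ = p → s * θ < τ := by
    intro θ τ p hθm hτm hc hτc
    have hki := key_ineq hθm ⟨hspos, hslt1⟩
    have hlt : h τ < h (s * θ) := by
      have heq : 1 - s^2 + s^2 * h θ = k + (1 - k) * h θ := by rw [hs2]; ring
      rw [heq, hc, ← hτc] at hki
      exact hki
    have hsθmem : s * θ ∈ Set.Icc (0:ℝ) 1 :=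
      ⟨le_of_lt (mul_pos hspos hθm.1), mul_le_one₀ hslt1.le hθm.1.le hθm.2⟩
    have hτmem : τ ∈ Set.Icc (0:ℝ) 1 := ⟨hτm.1.le, hτm.2.le⟩
    by_contra hcon
    push_neg at hcon
    rcases eq_or_lt_of_le hcon with heq | hlt2
    · rw [heq] at hlt; exact lt_irrefl _ hlt
    · exact absurd (h_anti hτmem hsθmem hlt2) (by linarith)
  have h1 := hkey θ₁ τ₁ p₁ hθ₁' hτ₁ hc₁ hτ₁p
  have h2 := hkey θ₂ τ₂ p₂ hθ₂' hτ₂ hc₂ hτ₂p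
  -- apply maximality at k' = 0
  have hmax0 := hmax 0 (by constructor <;> norm_num)
    τ₁ ⟨hτ₁.1.le, hτ₁.2.le⟩ τ₂ ⟨hτ₂.1.le, hτ₂.2.le⟩
    (by rw [hτ₁p]; ring) (by rw [hτ₂p]; ring)
  have hprod : (1 - k) * θ₁ * θ₂ = (s * θ₁) * (s * θ₂) := by
    rw [← hs2]; ring
  have hlt : (s * θ₁) * (s * θ₂) < τ₁ * τ₂ :=
    mul_lt_mul'' h1 h2 (le_of_lt (mul_pos hspos hθ₁'.1)) (le_of_lt (mul_pos hspos hθ₂'.1))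
  rw [hprod] at hmax0
  linarith [hmax0, hlt]
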